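/- Uniqueness of the topological Jordan decomposition: if s₁u₁ = s₂u₂ in a Hausdorff topological group, where s₁, s₂, u₁, u₂ pairwise commute, s₁ and s₂ have finite order coprime to p, and u₁ and u₂ are topologically p-unipotent, then s₁ = s₂ and u₁ = u₂. -/

import Mathlib

/-- `g` is topologically `p`-unipotent: `g ^ (p ^ n) → 1`. -/
def TopUnipotent (p : ℕ) {G : Type*} [Monoid G] [TopologicalSpace G] (g : G) : Prop :=
  Filter.Tendsto (fun n : ℕ => g ^ (p ^ n)) Filter.atTop (nhds 1)

/-- Uniqueness of the topological Jordan decomposition: if `s₁ * u₁ = s₂ * u₂`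
with all four elements pairwise commuting, `s₁`, `s₂` of finite order coprime
to `p` (absolutely `p`-semisimple) and `u₁`, `u₂` topologically `p`-unipotent,
then `s₁ = s₂` and `u₁ = u₂`. -/
theorem topological_jordan_decomposition_unique (p : ℕ) {G : Type*} [Group G]
    [TopologicalSpace G] [IsTopologicalGroup G] [T2Space G]
    {s₁ u₁ s₂ u₂ : G}
    (h12 : s₁ * u₁ = u₁ * s₁) (h13 : s₁ * s₂ = s₂ * s₁) (h14 : s₁ * u₂ = u₂ * s₁)
    (h23 : u₁ * s₂ = s₂ * u₁) (h24 : u₁ * u₂ = u₂ * u₁) (h34 : s₂ * u₂ = u₂ * s₂)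
    {n₁ n₂ : ℕ} (hn₁ : 0 < n₁) (hs₁ : s₁ ^ n₁ = 1) (hcop₁ : Nat.gcd n₁ p = 1)
    (hn₂ : 0 < n₂) (hs₂ : s₂ ^ n₂ = 1) (hcop₂ : Nat.gcd n₂ p = 1)
    (hu₁ : TopUnipotent p u₁) (hu₂ : TopUnipotent p u₂)
    (heq : s₁ * u₁ = s₂ * u₂) :
    s₁ = s₂ ∧ u₁ = u₂ := by
  set t : G := s₂⁻¹ * s₁ with ht
  -- t = u₂ * u₁⁻¹
  have ht' : t = u₂ * u₁⁻¹ := by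
    rw [ht]
    have : s₁ = s₂ * u₂ * u₁⁻¹ := by
      rw [← heq]; group
    rw [this]; group
  -- t is torsion of order dividing N := n₁ * n₂
  set N := n₁ * n₂ with hN
  have hNpos : 0 < N := Nat.mul_pos hn₁ hn₂
  have hcomm : Commute s₂⁻¹ s₁ := (Commute.symm h13).inv_left
  have htN : t ^ N = 1 := by
    rw [ht, hcomm.mul_pow, hN, mul_comm n₁ n₂, pow_mul, pow_mul, inv_pow, hs₂,
      ← pow_mul, mul_comm n₂ n₁, pow_mul, hs₁]
    simp
  -- t is topologically p-unipotent
  have hcomm' : Commute u₂ u₁⁻¹ := (Commute.symm h24).inv_right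
  have htu : Filter.Tendsto (fun n : ℕ => t ^ p ^ n) Filter.atTop (nhds 1) := by
    have : (fun n : ℕ => t ^ p ^ n) = fun n : ℕ => u₂ ^ p ^ n * (u₁ ^ p ^ n)⁻¹ := by
      funext n
      rw [ht', hcomm'.mul_pow, inv_pow]
    rw [this]
    have := hu₂.mul hu₁.inv
    simpa using this
  -- coprimality: p coprime to N
  have hcop : Nat.Coprime p N := by
    rw [hN]
    exact Nat.Coprime.mul_right (Nat.coprime_comm.mp hcop₁) (Nat.coprime_comm.mp hcop₂)
  -- m with p^m ≡ 1 mod N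
  obtain ⟨m, hm, hmod⟩ : ∃ m, 0 < m ∧ p ^ m ≡ 1 [MOD N] :=
    ⟨Nat.totient N, Nat.totient_pos.mpr hNpos, Nat.ModEq.pow_totient hcop⟩
  -- t ^ (p ^ m) = t
  have hfix : t ^ p ^ m = t := by
    have hdvd : orderOf t ∣ N := orderOf_dvd_of_pow_eq_one htN
    have : p ^ m ≡ 1 [MOD orderOf t] := hmod.of_dvd hdvd
    calc t ^ p ^ m = t ^ 1 := (pow_eq_pow_iff_modEq.mpr this)
    _ = t := pow_one t
  -- hence t ^ (p ^ (m * k)) = t for all k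
  have hfix' : ∀ k : ℕ, t ^ p ^ (m * k) = t := by
    intro k
    induction k with
    | zero => simp
    | succ k ih =>
      have : p ^ (m * (k + 1)) = p ^ (m * k) * p ^ m := by
        rw [← pow_add, Nat.mul_add, Nat.mul_one]
      rw [this, pow_mul, ih, hfix]
  -- the subsequence tends to 1 and is constantly t, so t = 1
  have hsub : Filter.Tendsto (fun k : ℕ => t ^ p ^ (m * k)) Filter.atTop (nhds 1) := by
    apply htu.comp
    exact Filter.tendsto_atTop_mono (fun k => Nat.le_mul_of_pos_left k hm) Filter.tendsto_id
  have hconst : Filter.Tendsto (fun k : ℕ => t ^ p ^ (m * k)) Filter.atTop (nhds t) := by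
    simp only [hfix']
    exact tendsto_const_nhds
  have ht1 : t = 1 := tendsto_nhds_unique hconst hsub
  constructor
  · have : s₂⁻¹ * s₁ = 1 := ht ▸ ht1
    calc s₁ = s₂ * (s₂⁻¹ * s₁) := by group
    _ = s₂ := by rw [this, mul_one]
  · have : u₂ * u₁⁻¹ = 1 := ht' ▸ ht1
    calc u₁ = (u₂ * u₁⁻¹)⁻¹ * u₂ := by group
    _ = u₂ := by rw [this]; group
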